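/- Let M be a monomial in K[x_1,…,x_n] and I the principal Borel ideal generated by Borel(M). Then the toric ring K[I], the K-subalgebra of K[x_1,…,x_n] generated by the monomials of Borel(M), and the Rees algebra R[It], the K-subalgebra of K[x_1,…,x_n,t] generated by x_1,…,x_n together with all m·t for m ∈ Borel(M), are normal domains: each is an integral domain that is integrally closed in its field of fractions. -/

import Mathlib

/-- A Borel move: `m'` is obtained from `m` by replacing one factor `x_j` by `x_i` with
`i < j`. -/
def BorelStep (n : ℕ) (m m' : Fin n →₀ ℕ) : Prop :=
  ∃ i j : Fin n, i < j ∧ 0 < m j ∧ m' + Finsupp.single j 1 = m + Finsupp.single i 1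

/-- `Borel(M)`: all monomials obtainable from `M` by Borel moves (including `M`). -/
def BorelSet (n : ℕ) (M : Fin n →₀ ℕ) : Set (Fin n →₀ ℕ) :=
  {m | Relation.ReflTransGen (BorelStep n) M m}

namespace BorelAux

/-- partial sum of the first `j` coordinates -/
def Psum {n : ℕ} (j : ℕ) (u : Fin n →₀ ℕ) : ℕ :=
  ∑ i ∈ Finset.univ.filter (fun i : Fin n => (i : ℕ) < j), u i

lemma Psum_add {n : ℕ} (j : ℕ) (u v : Fin n →₀ ℕ) :
    Psum j (u + v) = Psum j u + Psum j v := by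
  simp [Psum, Finset.sum_add_distrib]

lemma Psum_zero {n : ℕ} (j : ℕ) : Psum j (0 : Fin n →₀ ℕ) = 0 := by simp [Psum]

lemma Psum_mono {n : ℕ} {j j' : ℕ} (h : j ≤ j') (u : Fin n →₀ ℕ) :
    Psum j u ≤ Psum j' u := by
  apply Finset.sum_le_sum_of_subset
  intro i hi
  simp only [Finset.mem_filter, Finset.mem_univ, true_and] at hi ⊢
  omega

lemma Psum_zero_j {n : ℕ} (u : Fin n →₀ ℕ) : Psum 0 u = 0 := by simp [Psum]

lemma Psum_single {n : ℕ} (j : ℕ) (i : Fin n) (a : ℕ) :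
    Psum j (Finsupp.single i a) = if (i : ℕ) < j then a else 0 := by
  classical
  rw [Psum]
  simp only [Finsupp.single_apply, Finset.sum_ite_eq, Finset.mem_filter, Finset.mem_univ,
    true_and]

lemma Psum_succ {n : ℕ} (j : Fin n) (u : Fin n →₀ ℕ) :
    Psum (j + 1) u = Psum j u + u j := by
  classical
  have h : Finset.univ.filter (fun i : Fin n => (i : ℕ) < (j : ℕ) + 1) =
      insert j (Finset.univ.filter (fun i : Fin n => (i : ℕ) < j)) := by
    ext i
    simp only [Finset.mem_filter, Finset.mem_univ, true_and, Finset.mem_insert]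
    constructor
    · intro hi
      rcases Nat.lt_succ_iff_lt_or_eq.mp hi with h | h
      · exact Or.inr h
      · exact Or.inl (Fin.ext h)
    · rintro (rfl | hi)
      · omega
      · omega
  rw [Psum, Psum, h, Finset.sum_insert (by simp), add_comm]

lemma Psum_of_le {n : ℕ} {j : ℕ} (h : n ≤ j) (u : Fin n →₀ ℕ) :
    Psum j u = Psum n u := by
  unfold Psum
  congr 1
  ext i
  simp only [Finset.mem_filter, Finset.mem_univ, true_and]
  have := i.isLt
  omega

end BorelAux

-- appended after p1 content
namespace BorelAux2
open BorelAux

variable {n : ℕ}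

lemma step_psum {m m' : Fin n →₀ ℕ} (h : BorelStep n m m') :
    (∀ j, Psum j m ≤ Psum j m') ∧ Psum n m' = Psum n m := by
  obtain ⟨i, j, hij, hpos, heq⟩ := h
  have key : ∀ t, Psum t m' + (if (j : ℕ) < t then 1 else 0) =
      Psum t m + (if (i : ℕ) < t then 1 else 0) := by
    intro t
    have := congrArg (Psum t) heq
    rwa [Psum_add, Psum_add, Psum_single, Psum_single] at this
  constructor
  · intro t
    have := key t
    have hij' : (i : ℕ) < (j : ℕ) := hij
    by_cases h1 : (j : ℕ) < t <;> by_cases h2 : (i : ℕ) < t <;> simp [h1, h2] at this <;> omega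
  · have := key n
    have h1 : (j : ℕ) < n := j.isLt
    have h2 : (i : ℕ) < n := i.isLt
    simp [h1, h2] at this
    omega

lemma borel_psum {M m : Fin n →₀ ℕ} (h : m ∈ BorelSet n M) :
    Psum n m = Psum n M ∧ ∀ j, Psum j M ≤ Psum j m := by
  induction h with
  | refl => exact ⟨rfl, fun j => le_refl _⟩
  | tail _ hstep ih =>
    obtain ⟨hmono, htot⟩ := step_psum hstep
    exact ⟨htot.trans ih.1, fun j => (ih.2 j).trans (hmono j)⟩

lemma mem_borelSet_of_psum {M m : Fin n →₀ ℕ}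
    (htot : Psum n m = Psum n M) (hge : ∀ j, Psum j M ≤ Psum j m) :
    m ∈ BorelSet n M := by
  classical
  generalize hD : (∑ j ∈ Finset.range n, (Psum j m - Psum j M)) = D
  induction D using Nat.strong_induction_on generalizing M with
  | _ D IH =>
  by_cases hEq : ∀ j, Psum j M = Psum j m
  · -- m = M
    have : m = M := by
      ext i
      have h1 := Psum_succ i m
      have h2 := Psum_succ i M
      have e1 := hEq ((i : ℕ))
      have e2 := hEq ((i : ℕ) + 1)
      omega
    rw [this]
    exact Relation.ReflTransGen.refl
  · push_neg at hEq
    obtain ⟨a0, ha0⟩ := hEq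
    have hQ0 : Psum a0 M < Psum a0 m := lt_of_le_of_ne (hge a0) ha0
    -- a : least index with strict inequality
    set Q : ℕ → Prop := fun t => Psum t M < Psum t m with hQdef
    have hQex : ∃ t, Q t := ⟨a0, hQ0⟩
    set a := Nat.find hQex with hadef
    have hQa : Q a := Nat.find_spec hQex
    have hamin : ∀ t, t < a → ¬ Q t := fun t ht => Nat.find_min hQex ht
    have ha1 : 1 ≤ a := by
      by_contra h
      push_neg at h
      interval_cases a
      simp only [hQdef, Psum_zero_j] at hQa
      omega
    have han : a < n := by
      rcases lt_or_ge a n with h | h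
      · exact h
      · exfalso
        have := Psum_of_le h m
        have := Psum_of_le h M
        simp only [hQdef] at hQa
        omega
    -- b : least index > a where inequality becomes equality
    set R : ℕ → Prop := fun t => a < t ∧ ¬ (Psum t M < Psum t m) with hRdef
    have hRex : ∃ t, R t := ⟨n, han, by omega⟩
    set b := Nat.find hRex with hbdef
    have hRb : R b := Nat.find_spec hRex
    have hbmin : ∀ t, t < b → ¬ R t := fun t ht => Nat.find_min hRex ht
    have hab : a < b := hRb.1
    have hbn : b ≤ n := Nat.find_min' hRex ⟨han, by omega⟩
    have hstrict : ∀ t, a ≤ t → t < b → Psum t M < Psum t m := by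
      intro t hat htb
      rcases eq_or_lt_of_le hat with rfl | h
      · exact hQa
      · have := hbmin t htb
        simp only [hRdef, not_and, not_not] at this
        omega
    have hbeq : Psum b m ≤ Psum b M := by
      have := hRb.2
      omega
    -- positions
    have hbpos : 1 ≤ b := by omega
    have hn0 : 0 < n := by omega
    set p : Fin n := ⟨a - 1, by omega⟩ with hpdef
    set q : Fin n := ⟨b - 1, by omega⟩ with hqdef
    have hpq : p < q := by
      simp only [hpdef, hqdef, Fin.lt_def]
      omega
    have hMq : 0 < M q := by
      have h1 := Psum_succ q M
      have h2 := Psum_succ q m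
      have h3 : ((q : ℕ) : ℕ) + 1 = b := by simp [hqdef]; omega
      rw [h3] at h1 h2
      have h4 : (q : ℕ) = b - 1 := rfl
      rw [h4] at h1 h2
      have h5 := hstrict (b-1) (by omega) (by omega)
      have h6 := hge b
      omega
    set M' : Fin n →₀ ℕ := M + Finsupp.single p 1 - Finsupp.single q 1 with hM'def
    have hle : Finsupp.single q 1 ≤ M + Finsupp.single p 1 := by
      rw [Finsupp.single_le_iff]
      simp only [Finsupp.add_apply]
      omega
    have heq : M' + Finsupp.single q 1 = M + Finsupp.single p 1 :=
      tsub_add_cancel_of_le hle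
    have hstep : BorelStep n M M' := ⟨p, q, hpq, hMq, heq⟩
    have hpsum : ∀ t, Psum t M' + (if (q : ℕ) < t then 1 else 0) =
        Psum t M + (if (p : ℕ) < t then 1 else 0) := by
      intro t
      have := congrArg (Psum t) heq
      rwa [Psum_add, Psum_add, Psum_single, Psum_single] at this
    have hpv : (p : ℕ) = a - 1 := rfl
    have hqv : (q : ℕ) = b - 1 := rfl
    have hge' : ∀ j, Psum j M' ≤ Psum j m := by
      intro t
      have hk := hpsum t
      rw [hpv, hqv] at hk
      by_cases h1 : b - 1 < t <;> by_cases h2 : a - 1 < t <;> simp [h1, h2] at hk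
      · have := hge t; omega
      · omega
      · -- a - 1 < t, ¬ (b-1 < t) : a ≤ t < b (t ≥ a since a-1 < t and a ≥ 1)
        have := hstrict t (by omega) (by omega)
        omega
      · have := hge t; omega
    have htot' : Psum n m = Psum n M' := by
      have hk := hpsum n
      rw [hpv, hqv] at hk
      have c1 : a - 1 < n := by omega
      have c2 : b - 1 < n := by omega
      simp [c1, c2] at hk
      omega
    have hDlt : (∑ j ∈ Finset.range n, (Psum j m - Psum j M')) < D := by
      rw [← hD]
      apply Finset.sum_lt_sum
      · intro j _
        have := hge' j
        have := hge j
        have hk := hpsum j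
        rw [hpv, hqv] at hk
        by_cases h1 : b - 1 < j <;> by_cases h2 : a - 1 < j <;> simp [h1, h2] at hk <;> omega
      · refine ⟨a, Finset.mem_range.mpr han, ?_⟩
        have hk := hpsum a
        rw [hpv, hqv] at hk
        have c1 : a - 1 < a := by omega
        have c2 : ¬ (b - 1 < a) := by omega
        simp [c1, c2] at hk
        simp only [hQdef] at hQa
        omega
    have htail := IH _ hDlt htot' hge' rfl
    exact Relation.ReflTransGen.head hstep htail

lemma mem_borelSet_iff {M m : Fin n →₀ ℕ} :
    m ∈ BorelSet n M ↔ Psum n m = Psum n M ∧ ∀ j, Psum j M ≤ Psum j m :=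
  ⟨borel_psum, fun ⟨h1, h2⟩ => mem_borelSet_of_psum h1 h2⟩

end BorelAux2
namespace BorelAux3
open BorelAux BorelAux2

variable {n : ℕ}

lemma psum_n_eq_zero {u : Fin n →₀ ℕ} (h : Psum n u = 0) : u = 0 := by
  ext i
  have hi : i ∈ Finset.univ.filter (fun i : Fin n => (i : ℕ) < n) := by
    simp [i.isLt]
  have := Finset.sum_eq_zero_iff.mp h i hi
  simpa using this

/-- build a finsupp with prescribed partial sums -/
lemma exists_of_partial (q : ℕ → ℕ) (hq0 : q 0 = 0) (hmono : ∀ j, j < n → q j ≤ q (j + 1)) :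
    ∃ m : Fin n →₀ ℕ, (∀ i : Fin n, m i = q ((i : ℕ) + 1) - q (i : ℕ)) ∧
      ∀ j, j ≤ n → Psum j m = q j := by
  refine ⟨Finsupp.equivFunOnFinite.symm (fun i : Fin n => q ((i : ℕ) + 1) - q (i : ℕ)), fun i => rfl, ?_⟩
  intro j hj
  induction j with
  | zero => simpa [Psum_zero_j] using hq0.symm
  | succ j ih =>
    have hjn : j < n := hj
    have := Psum_succ (n := n) ⟨j, hjn⟩
      (Finsupp.equivFunOnFinite.symm (fun i : Fin n => q ((i : ℕ) + 1) - q (i : ℕ)))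
    simp only [Fin.val_mk] at this
    rw [this, ih (by omega)]
    have : Finsupp.equivFunOnFinite.symm (fun i : Fin n => q ((i : ℕ) + 1) - q (i : ℕ)) ⟨j, hjn⟩
        = q (j+1) - q j := rfl
    rw [this]
    have := hmono j hjn
    omega

lemma psum_sub {u m : Fin n →₀ ℕ} (h : m ≤ u) (j : ℕ) :
    Psum j (u - m) + Psum j m = Psum j u := by
  rw [← Psum_add]
  congr 1
  exact tsub_add_cancel_of_le h

/-- Toric decomposition: integer points of the scaled polytope decompose. -/
lemma dec_toric (M : Fin n →₀ ℕ) :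
    ∀ k (u : Fin n →₀ ℕ), Psum n u = k * Psum n M → (∀ j, k * Psum j M ≤ Psum j u) →
    ∃ ms : Multiset (Fin n →₀ ℕ), (∀ m ∈ ms, m ∈ BorelSet n M) ∧
      Multiset.card ms = k ∧ ms.sum = u := by
  intro k
  induction k with
  | zero =>
    intro u htot _
    simp only [Nat.zero_mul] at htot
    exact ⟨0, by simp, by simp, by simp [psum_n_eq_zero htot]⟩
  | succ k IH =>
    intro u htot hge
    set q : ℕ → ℕ := fun j => (Finset.Icc j n).sup
      (fun t => Psum t M - (Psum t u - Psum j u)) with hqdef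
    have hle_sup : ∀ {j t : ℕ}, j ≤ t → t ≤ n →
        Psum t M - (Psum t u - Psum j u) ≤ q j := by
      intro j t h1 h2
      rw [hqdef]
      exact Finset.le_sup (f := fun t => Psum t M - (Psum t u - Psum j u))
        (Finset.mem_Icc.mpr ⟨h1, h2⟩)
    have hsup_le : ∀ {j b : ℕ}, (∀ t, j ≤ t → t ≤ n →
        Psum t M - (Psum t u - Psum j u) ≤ b) → q j ≤ b := by
      intro j b h
      rw [hqdef]
      exact Finset.sup_le (fun t ht => h t (Finset.mem_Icc.mp ht).1 (Finset.mem_Icc.mp ht).2)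
    -- (5) : q j ≤ Psum j u - k * Psum j M
    have hq5 : ∀ j, j ≤ n → q j + k * Psum j M ≤ Psum j u := by
      intro j hj
      have : q j ≤ Psum j u - k * Psum j M := by
        apply hsup_le
        intro t ht1 ht2
        have h1 : Psum j u ≤ Psum t u := Psum_mono ht1 u
        have h2 : (k+1) * Psum t M ≤ Psum t u := hge t
        have h3 : Psum j M ≤ Psum t M := Psum_mono ht1 M
        have h4 : (k+1) * Psum j M ≤ Psum j u := hge j
        have h5 : k * Psum j M ≤ k * Psum t M := Nat.mul_le_mul_left k h3
        have h6 : k * Psum t M + Psum t M ≤ Psum t u := by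
          have : (k+1) * Psum t M = k * Psum t M + Psum t M := by ring
          omega
        have h7 : k * Psum j M + Psum j M ≤ Psum j u := by
          have : (k+1) * Psum j M = k * Psum j M + Psum j M := by ring
          omega
        omega
      have h4 : (k+1) * Psum j M ≤ Psum j u := hge j
      have h7 : k * Psum j M + Psum j M ≤ Psum j u := by
        have : (k+1) * Psum j M = k * Psum j M + Psum j M := by ring
        omega
      omega
    have hq0 : q 0 = 0 := by
      have := hq5 0 (Nat.zero_le n)
      simp only [Psum_zero_j, Nat.mul_zero] at this
      omega
    have hqn : q n = Psum n M := by
      simp only [hqdef, Finset.Icc_self, Finset.sup_singleton]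
      omega
    have hqlow : ∀ j, j ≤ n → Psum j M ≤ q j := by
      intro j hj
      have := hle_sup (le_refl j) hj
      omega
    have hqmono : ∀ j, j < n → q j ≤ q (j + 1) := by
      intro j hjn
      apply hsup_le
      intro t ht1 ht2
      rcases Nat.eq_or_lt_of_le ht1 with rfl | hlt
      · have h1 : Psum j M ≤ Psum (j+1) M := Psum_mono (Nat.le_succ j) M
        have h2 := hle_sup (le_refl (j+1)) (show j+1 ≤ n by omega)
        omega
      · have h1 := hle_sup (show j+1 ≤ t from hlt) ht2
        have h2 : Psum j u ≤ Psum (j+1) u := Psum_mono (Nat.le_succ j) u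
        omega
    have hqstep : ∀ i : Fin n, q ((i : ℕ) + 1) ≤ q (i : ℕ) + u i := by
      intro i
      apply hsup_le
      intro t ht1 ht2
      have h1 := hle_sup (show (i:ℕ) ≤ t by omega) ht2
      have h2 : Psum ((i : ℕ) + 1) u = Psum (i : ℕ) u + u i := Psum_succ i u
      have h3 : Psum ((i:ℕ)+1) u ≤ Psum t u := Psum_mono ht1 u
      have h4 : Psum (i:ℕ) u ≤ Psum t u := Psum_mono (by omega) u
      omega
    obtain ⟨m, hmval, hmpsum⟩ := exists_of_partial q hq0 hqmono
    have hmBorel : m ∈ BorelSet n M := by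
      apply mem_borelSet_of_psum
      · rw [hmpsum n (le_refl n), hqn]
      · intro j
        rcases le_or_gt j n with hj | hj
        · rw [hmpsum j hj]; exact hqlow j hj
        · rw [Psum_of_le (le_of_lt hj) m, Psum_of_le (le_of_lt hj) M,
            hmpsum n (le_refl n), hqn]
    have hmle : m ≤ u := by
      rw [Finsupp.le_def]
      intro i
      rw [hmval i]
      have := hqstep i
      omega
    set u' := u - m with hu'def
    have hpsu' : ∀ j, j ≤ n → Psum j u' + q j = Psum j u := by
      intro j hj
      have := psum_sub hmle j
      rw [hmpsum j hj] at this
      exact this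
    have htot' : Psum n u' = k * Psum n M := by
      have := hpsu' n (le_refl n)
      rw [hqn] at this
      have h2 : (k+1) * Psum n M = k * Psum n M + Psum n M := by ring
      omega
    have hge' : ∀ j, k * Psum j M ≤ Psum j u' := by
      intro j
      rcases le_or_gt j n with hj | hj
      · have h1 := hpsu' j hj
        have h2 := hq5 j hj
        omega
      · rw [Psum_of_le (le_of_lt hj) u', Psum_of_le (le_of_lt hj) M]
        have h1 := hpsu' n (le_refl n)
        have h2 := hq5 n (le_refl n)
        omega
    obtain ⟨ms, hmsB, hmscard, hmssum⟩ := IH u' htot' hge'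
    refine ⟨m ::ₘ ms, ?_, by simp [hmscard], ?_⟩
    · intro x hx
      rcases Multiset.mem_cons.mp hx with rfl | hx
      · exact hmBorel
      · exact hmsB x hx
    · rw [Multiset.sum_cons, hmssum, hu'def]
      rw [add_comm]
      exact tsub_add_cancel_of_le hmle

/-- Rees extraction: from a point satisfying the scaled inequalities one can split off
a point of the scaled polytope. -/
lemma dec_rees (M : Fin n →₀ ℕ) (k : ℕ) (u : Fin n →₀ ℕ)
    (hge : ∀ j, k * Psum j M ≤ Psum j u) :
    ∃ w : Fin n →₀ ℕ, w ≤ u ∧ Psum n w = k * Psum n M ∧ ∀ j, k * Psum j M ≤ Psum j w := by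
  set q : ℕ → ℕ := fun j => (Finset.Icc j n).sup
    (fun t => k * Psum t M - (Psum t u - Psum j u)) with hqdef
  have hle_sup : ∀ {j t : ℕ}, j ≤ t → t ≤ n →
      k * Psum t M - (Psum t u - Psum j u) ≤ q j := by
    intro j t h1 h2
    rw [hqdef]
    exact Finset.le_sup (f := fun t => k * Psum t M - (Psum t u - Psum j u))
      (Finset.mem_Icc.mpr ⟨h1, h2⟩)
  have hsup_le : ∀ {j b : ℕ}, (∀ t, j ≤ t → t ≤ n →
      k * Psum t M - (Psum t u - Psum j u) ≤ b) → q j ≤ b := by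
    intro j b h
    rw [hqdef]
    exact Finset.sup_le (fun t ht => h t (Finset.mem_Icc.mp ht).1 (Finset.mem_Icc.mp ht).2)
  have hqle : ∀ j, j ≤ n → q j ≤ Psum j u := by
    intro j hj
    apply hsup_le
    intro t ht1 ht2
    have h1 : Psum j u ≤ Psum t u := Psum_mono ht1 u
    have h2 : k * Psum t M ≤ Psum t u := hge t
    omega
  have hq0 : q 0 = 0 := by
    have := hqle 0 (Nat.zero_le n)
    simp only [Psum_zero_j] at this
    omega
  have hqn : q n = k * Psum n M := by
    simp only [hqdef, Finset.Icc_self, Finset.sup_singleton]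
    omega
  have hqlow : ∀ j, j ≤ n → k * Psum j M ≤ q j := by
    intro j hj
    have := hle_sup (le_refl j) hj
    omega
  have hqmono : ∀ j, j < n → q j ≤ q (j + 1) := by
    intro j hjn
    apply hsup_le
    intro t ht1 ht2
    rcases Nat.eq_or_lt_of_le ht1 with rfl | hlt
    · have h1 : k * Psum j M ≤ k * Psum (j+1) M :=
        Nat.mul_le_mul_left k (Psum_mono (Nat.le_succ j) M)
      have h2 := hle_sup (le_refl (j+1)) (show j+1 ≤ n by omega)
      omega
    · have h1 := hle_sup (show j+1 ≤ t from hlt) ht2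
      have h2 : Psum j u ≤ Psum (j+1) u := Psum_mono (Nat.le_succ j) u
      omega
  have hqstep : ∀ i : Fin n, q ((i : ℕ) + 1) ≤ q (i : ℕ) + u i := by
    intro i
    apply hsup_le
    intro t ht1 ht2
    have h1 := hle_sup (show (i:ℕ) ≤ t by omega) ht2
    have h2 : Psum ((i : ℕ) + 1) u = Psum (i : ℕ) u + u i := Psum_succ i u
    have h3 : Psum ((i:ℕ)+1) u ≤ Psum t u := Psum_mono ht1 u
    have h4 : Psum (i:ℕ) u ≤ Psum t u := Psum_mono (by omega) u
    omega
  obtain ⟨w, hwval, hwpsum⟩ := exists_of_partial q hq0 hqmono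
  refine ⟨w, ?_, by rw [hwpsum n (le_refl n), hqn], ?_⟩
  · rw [Finsupp.le_def]
    intro i
    rw [hwval i]
    have := hqstep i
    omega
  · intro j
    rcases le_or_gt j n with hj | hj
    · rw [hwpsum j hj]; exact hqlow j hj
    · rw [Psum_of_le (le_of_lt hj) w, Psum_of_le (le_of_lt hj) M,
        hwpsum n (le_refl n), hqn]

end BorelAux3
namespace BorelAux4
open BorelAux BorelAux2 BorelAux3

variable {n : ℕ}

lemma mem_toric_closure_iff {M u : Fin n →₀ ℕ} :
    u ∈ AddSubmonoid.closure (BorelSet n M) ↔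
      ∃ k, Psum n u = k * Psum n M ∧ ∀ j, k * Psum j M ≤ Psum j u := by
  constructor
  · intro hu
    induction hu using AddSubmonoid.closure_induction with
    | mem x hx =>
      obtain ⟨h1, h2⟩ := borel_psum hx
      exact ⟨1, by simpa using h1, fun j => by simpa using h2 j⟩
    | zero => exact ⟨0, by simp [Psum_zero], fun j => by simp [Psum_zero]⟩
    | add x y _ _ hx hy =>
      obtain ⟨k1, hk1, hk1'⟩ := hx
      obtain ⟨k2, hk2, hk2'⟩ := hy
      refine ⟨k1 + k2, ?_, fun j => ?_⟩
      · rw [Psum_add, hk1, hk2]; ring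
      · rw [Psum_add]
        have := hk1' j
        have := hk2' j
        nlinarith
  · rintro ⟨k, h1, h2⟩
    obtain ⟨ms, hmsB, _, hmssum⟩ := dec_toric M k u h1 h2
    rw [← hmssum]
    exact AddSubmonoid.multiset_sum_mem _ ms
      (fun m hm => AddSubmonoid.subset_closure (hmsB m hm))

/-- the generators of the Rees semigroup -/
def reesGens (M : Fin n →₀ ℕ) : Set ((Fin n ⊕ Unit) →₀ ℕ) :=
  (Set.range fun i : Fin n => Finsupp.single (Sum.inl i) 1) ∪
    {μ | ∃ m ∈ BorelSet n M,
      μ = Finsupp.mapDomain Sum.inl m + Finsupp.single (Sum.inr ()) 1}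

/-- restriction of an exponent on `Fin n ⊕ Unit` to `Fin n` -/
noncomputable def res {n : ℕ} (μ : (Fin n ⊕ Unit) →₀ ℕ) : Fin n →₀ ℕ :=
  Finsupp.equivFunOnFinite.symm (fun i => μ (Sum.inl i))

@[simp] lemma res_apply (μ : (Fin n ⊕ Unit) →₀ ℕ) (i : Fin n) :
    res μ i = μ (Sum.inl i) := rfl

lemma res_add (μ ν : (Fin n ⊕ Unit) →₀ ℕ) : res (μ + ν) = res μ + res ν := by
  ext i; simp

lemma res_zero : res (0 : (Fin n ⊕ Unit) →₀ ℕ) = 0 := by ext i; simp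

lemma res_mapDomain (m : Fin n →₀ ℕ) : res (Finsupp.mapDomain Sum.inl m) = m := by
  ext i
  rw [res_apply, Finsupp.mapDomain_apply Sum.inl_injective]

lemma res_single_inr (a : ℕ) : res (Finsupp.single (Sum.inr () : Fin n ⊕ Unit) a) = 0 := by
  ext i
  rw [res_apply, Finsupp.single_eq_of_ne (by simp)]
  rfl

lemma mu_decomp (μ : (Fin n ⊕ Unit) →₀ ℕ) :
    μ = Finsupp.mapDomain Sum.inl (res μ) + Finsupp.single (Sum.inr ()) (μ (Sum.inr ())) := by
  ext x
  cases x with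
  | inl a =>
    simp only [Finsupp.add_apply]
    rw [Finsupp.mapDomain_apply Sum.inl_injective, Finsupp.single_eq_of_ne (by simp)]
    simp
  | inr b =>
    cases b
    simp only [Finsupp.add_apply]
    rw [Finsupp.mapDomain_notin_range _ _ (by simp), Finsupp.single_eq_same]
    simp

lemma mapDomain_inl_mem_closure (M : Fin n →₀ ℕ) (v : Fin n →₀ ℕ) :
    Finsupp.mapDomain Sum.inl v ∈ AddSubmonoid.closure (reesGens M) := by
  induction v using Finsupp.induction with
  | zero =>
    rw [Finsupp.mapDomain_zero]
    exact AddSubmonoid.zero_mem _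
  | single_add a b f _ _ ih =>
    rw [Finsupp.mapDomain_add, Finsupp.mapDomain_single]
    apply AddSubmonoid.add_mem
    · have : Finsupp.single (Sum.inl a : Fin n ⊕ Unit) b
          = b • Finsupp.single (Sum.inl a : Fin n ⊕ Unit) 1 := by
        rw [Finsupp.smul_single]
        simp
      rw [this]
      refine AddSubmonoid.nsmul_mem _ ?_ b
      apply AddSubmonoid.subset_closure
      exact Set.mem_union_left _ ⟨a, rfl⟩
    · exact ih

lemma mem_rees_closure_iff {M : Fin n →₀ ℕ} {μ : (Fin n ⊕ Unit) →₀ ℕ} :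
    μ ∈ AddSubmonoid.closure (reesGens M) ↔
      ∀ j, μ (Sum.inr ()) * Psum j M ≤ Psum j (res μ) := by
  constructor
  · intro hμ
    induction hμ using AddSubmonoid.closure_induction with
    | mem x hx =>
      rcases hx with ⟨i, rfl⟩ | ⟨m, hm, rfl⟩
      · intro j
        rw [Finsupp.single_eq_of_ne (by simp)]
        simp
      · intro j
        obtain ⟨h1, h2⟩ := borel_psum hm
        have hval : (Finsupp.mapDomain Sum.inl m + Finsupp.single (Sum.inr ()) 1 :
            (Fin n ⊕ Unit) →₀ ℕ) (Sum.inr ()) = 1 := by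
          simp only [Finsupp.add_apply]
          rw [Finsupp.mapDomain_notin_range _ _ (by simp), Finsupp.single_eq_same]
        rw [hval, res_add, res_mapDomain, res_single_inr, add_zero, one_mul]
        exact h2 j
    | zero => intro j; simp [res_zero, Psum_zero]
    | add x y _ _ hx hy =>
      intro j
      rw [res_add, Psum_add, Finsupp.add_apply, add_mul]
      exact add_le_add (hx j) (hy j)
  · intro h
    set k := μ (Sum.inr ()) with hk
    obtain ⟨w, hwle, hwtot, hwge⟩ := dec_rees M k (res μ) h
    obtain ⟨ms, hmsB, hmscard, hmssum⟩ := dec_toric M k w hwtot hwge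
    have hsum : (ms.map (fun m => Finsupp.mapDomain Sum.inl m
        + Finsupp.single (Sum.inr () : Fin n ⊕ Unit) 1)).sum
        = Finsupp.mapDomain Sum.inl w + Finsupp.single (Sum.inr ()) k := by
      rw [← hmssum, ← hmscard]
      clear hmsB hmssum hmscard hwle hwtot hwge
      induction ms using Multiset.induction with
      | empty => simp
      | cons a s ih =>
        simp only [Multiset.map_cons, Multiset.sum_cons,
          Multiset.card_cons, ih, Finsupp.mapDomain_add]
        rw [Finsupp.single_add]
        abel
    have hdecomp : μ = Finsupp.mapDomain Sum.inl (res μ - w) +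
        (Finsupp.mapDomain Sum.inl w + Finsupp.single (Sum.inr ()) k) := by
      rw [← add_assoc, ← Finsupp.mapDomain_add, tsub_add_cancel_of_le hwle]
      exact mu_decomp μ
    rw [hdecomp]
    apply AddSubmonoid.add_mem
    · exact mapDomain_inl_mem_closure M _
    · rw [← hsum]
      apply AddSubmonoid.multiset_sum_mem
      intro x hx
      obtain ⟨m, hm, rfl⟩ := Multiset.mem_map.mp hx
      exact AddSubmonoid.subset_closure (Set.mem_union_right _ ⟨m, hmsB m hm, rfl⟩)

end BorelAux4
namespace MonAux

open MvPolynomial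

variable {σ : Type*} {K : Type*} [Field K]

/-- the subalgebra of polynomials all of whose exponents lie in `S` -/
def suppIn (K : Type*) [Field K] (σ : Type*) (S : AddSubmonoid (σ →₀ ℕ)) :
    Subalgebra K (MvPolynomial σ K) where
  carrier := {f | ∀ u ∈ f.support, u ∈ S}
  mul_mem' := by
    classical
    intro a b ha hb u hu
    have := MvPolynomial.support_mul a b hu
    rw [Finset.mem_add] at this
    obtain ⟨x, hx, y, hy, rfl⟩ := this
    exact S.add_mem (ha x hx) (hb y hy)
  add_mem' := by
    classical
    intro a b ha hb u hu
    have := Finsupp.support_add hu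
    rw [Finset.mem_union] at this
    rcases this with h | h
    · exact ha u h
    · exact hb u h
  algebraMap_mem' := by
    intro r u hu
    classical
    rw [MvPolynomial.mem_support_iff, MvPolynomial.algebraMap_eq, MvPolynomial.coeff_C] at hu
    by_cases h : (0 : σ →₀ ℕ) = u
    · rw [← h]; exact S.zero_mem
    · simp [h] at hu

lemma mem_suppIn {S : AddSubmonoid (σ →₀ ℕ)} {f : MvPolynomial σ K} :
    f ∈ suppIn K σ S ↔ ∀ u ∈ f.support, u ∈ S := Iff.rfl

lemma monomial_mem_suppIn {S : AddSubmonoid (σ →₀ ℕ)} {u : σ →₀ ℕ} {c : K} (hu : u ∈ S) :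
    MvPolynomial.monomial u c ∈ suppIn K σ S := by
  classical
  intro v hv
  rw [MvPolynomial.support_monomial] at hv
  split at hv
  · simp at hv
  · rw [Finset.mem_singleton] at hv
    exact hv ▸ hu

lemma monomial_one_mem_adjoin {B : Set (σ →₀ ℕ)} {u : σ →₀ ℕ}
    (hu : u ∈ AddSubmonoid.closure B) :
    MvPolynomial.monomial u (1 : K) ∈
      Algebra.adjoin K {p : MvPolynomial σ K | ∃ m ∈ B, p = MvPolynomial.monomial m (1 : K)} := by
  induction hu using AddSubmonoid.closure_induction with
  | mem x hx => exact Algebra.subset_adjoin ⟨x, hx, rfl⟩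
  | zero =>
    have : (MvPolynomial.monomial (0 : σ →₀ ℕ) (1 : K)) = 1 := by
      simp [MvPolynomial.monomial_zero']
    rw [this]
    exact Subalgebra.one_mem _
  | add x y _ _ hx hy =>
    have : (MvPolynomial.monomial (x + y) (1 : K)) =
        MvPolynomial.monomial x (1 : K) * MvPolynomial.monomial y (1 : K) := by
      rw [MvPolynomial.monomial_mul, one_mul]
    rw [this]
    exact Subalgebra.mul_mem _ hx hy

lemma adjoin_eq_suppIn (B : Set (σ →₀ ℕ)) :
    Algebra.adjoin K {p : MvPolynomial σ K | ∃ m ∈ B, p = MvPolynomial.monomial m (1 : K)} =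
      suppIn K σ (AddSubmonoid.closure B) := by
  apply le_antisymm
  · rw [Algebra.adjoin_le_iff]
    rintro _ ⟨m, hm, rfl⟩
    exact monomial_mem_suppIn (AddSubmonoid.subset_closure hm)
  · intro f hf
    rw [MvPolynomial.as_sum f]
    apply Subalgebra.sum_mem
    intro v hv
    have : (MvPolynomial.monomial v) (MvPolynomial.coeff v f) =
        (MvPolynomial.coeff v f) • (MvPolynomial.monomial v) (1 : K) := by
      rw [MvPolynomial.smul_monomial, smul_eq_mul, mul_one]
    rw [this]
    exact Subalgebra.smul_mem _ (monomial_one_mem_adjoin (hf v hv)) _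

/-- uniqueness of base-`D` digits -/
lemma digits_unique (D : ℕ) : ∀ (m : ℕ) (f g : ℕ → ℕ),
    (∀ x, x < m → f x < D) → (∀ x, x < m → g x < D) →
    (∑ x ∈ Finset.range m, f x * D ^ x) = (∑ x ∈ Finset.range m, g x * D ^ x) →
    ∀ x, x < m → f x = g x := by
  intro m
  induction m with
  | zero => intro f g _ _ _ x hx; omega
  | succ m ih =>
    intro f g hf hg hsum x hx
    have hD : 0 < D := lt_of_le_of_lt (Nat.zero_le _) (hf 0 (by omega))
    have expand : ∀ h : ℕ → ℕ, (∑ x ∈ Finset.range (m+1), h x * D ^ x)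
        = h 0 + (∑ x ∈ Finset.range m, h (x+1) * D ^ x) * D := by
      intro h
      rw [Finset.sum_range_succ' (fun x => h x * D ^ x) m]
      simp only [pow_zero, mul_one]
      rw [add_comm]
      congr 1
      rw [Finset.sum_mul]
      apply Finset.sum_congr rfl
      intro y _
      ring
    rw [expand f, expand g] at hsum
    have h0 : f 0 = g 0 := by
      have := congrArg (fun z => z % D) hsum
      simp only [Nat.add_mul_mod_self_right] at this
      rwa [Nat.mod_eq_of_lt (hf 0 (by omega)), Nat.mod_eq_of_lt (hg 0 (by omega))] at this
    have hrest : (∑ x ∈ Finset.range m, f (x+1) * D ^ x)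
        = (∑ x ∈ Finset.range m, g (x+1) * D ^ x) := by
      have h1 : (∑ x ∈ Finset.range m, f (x+1) * D ^ x) * D
          = (∑ x ∈ Finset.range m, g (x+1) * D ^ x) * D := by omega
      exact Nat.eq_of_mul_eq_mul_right hD h1
    rcases Nat.eq_zero_or_pos x with rfl | hxpos
    · exact h0
    · have := ih (fun x => f (x+1)) (fun x => g (x+1))
        (fun y hy => hf (y+1) (by omega)) (fun y hy => hg (y+1) (by omega)) hrest
        (x - 1) (by omega)
      simpa [Nat.sub_add_cancel hxpos] using this

/-- an additive functional injective on a given finite set of exponents -/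
lemma exists_injective_functional (A : Finset (σ →₀ ℕ)) :
    ∃ ℓ : (σ →₀ ℕ) →+ ℕ, Set.InjOn ℓ A := by
  classical
  set t : Finset σ := A.biUnion Finsupp.support with htdef
  set D : ℕ := 1 + A.sup (fun u => t.sup (fun i => u i)) with hDdef
  have hbound : ∀ u ∈ A, ∀ i, u i < D := by
    intro u hu i
    by_cases hi : i ∈ u.support
    · have h1 : u i ≤ t.sup (fun i => u i) := by
        apply Finset.le_sup
        exact Finset.mem_biUnion.mpr ⟨u, hu, hi⟩
      have h2 : t.sup (fun i => u i) ≤ A.sup (fun u => t.sup (fun i => u i)) :=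
        Finset.le_sup (f := fun u : σ →₀ ℕ => t.sup (fun i => u i)) hu
      omega
    · rw [Finsupp.notMem_support_iff] at hi
      rw [hi]
      omega
  set e : {x // x ∈ t} ≃ Fin t.card := t.equivFin with hedef
  set w : σ → ℕ := fun i => if h : i ∈ t then D ^ ((e ⟨i, h⟩ : ℕ)) else 0 with hwdef
  refine ⟨⟨⟨fun u => ∑ i ∈ t, u i * w i, by simp⟩, ?_⟩, ?_⟩
  · intro u v
    simp only
    rw [← Finset.sum_add_distrib]
    apply Finset.sum_congr rfl
    intro i _
    simp [add_mul]
  · intro u hu v hv huv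
    simp only [AddMonoidHom.coe_mk, ZeroHom.coe_mk, Finset.mem_coe] at huv hu hv
    set F : (σ →₀ ℕ) → ℕ → ℕ := fun z x => if h : x < t.card
      then z ((e.symm ⟨x, h⟩ : σ)) else 0 with hFdef
    have reindex : ∀ z : σ →₀ ℕ, (∑ i ∈ t, z i * w i)
        = ∑ x ∈ Finset.range t.card, F z x * D ^ x := by
      intro z
      have step1 : (∑ i ∈ t, z i * w i) = ∑ i ∈ t.attach, z (i : σ) * D ^ ((e i : ℕ)) := by
        rw [← Finset.sum_attach t (fun i => z i * w i)]
        apply Finset.sum_congr rfl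
        intro i _
        congr 1
        rw [hwdef]
        simp only
        rw [dif_pos i.2]
      have step2 : (∑ i ∈ t.attach, z (i : σ) * D ^ ((e i : ℕ)))
          = ∑ y : Fin t.card, z ((e.symm y : σ)) * D ^ (y : ℕ) := by
        rw [← Equiv.sum_comp e (fun y : Fin t.card => z ((e.symm y : σ)) * D ^ (y : ℕ))]
        rw [← Finset.univ_eq_attach]
        apply Finset.sum_congr rfl
        intro i _
        rw [Equiv.symm_apply_apply]
      have step3 : (∑ y : Fin t.card, z ((e.symm y : σ)) * D ^ (y : ℕ))
          = ∑ x ∈ Finset.range t.card, F z x * D ^ x := by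
        rw [← Fin.sum_univ_eq_sum_range (fun x => F z x * D ^ x) t.card]
        apply Finset.sum_congr rfl
        intro y _
        congr 1
        rw [hFdef]
        simp only
        rw [dif_pos y.isLt]
      rw [step1, step2, step3]
    rw [reindex u, reindex v] at huv
    have hFbound : ∀ z, z ∈ A → ∀ x, x < t.card → F z x < D := by
      intro z hz x hx
      rw [hFdef]
      simp only
      rw [dif_pos hx]
      exact hbound z hz _
    have hdig := digits_unique D t.card (F u) (F v) (hFbound u hu) (hFbound v hv) huv
    ext i
    by_cases hi : i ∈ t
    · have := hdig ((e ⟨i, hi⟩ : ℕ)) (e ⟨i, hi⟩).isLt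
      rw [hFdef] at this
      simp only at this
      rw [dif_pos (e ⟨i, hi⟩).isLt, dif_pos (e ⟨i, hi⟩).isLt] at this
      have heta : (⟨((e ⟨i, hi⟩ : Fin t.card) : ℕ), (e ⟨i, hi⟩).isLt⟩ : Fin t.card)
          = e ⟨i, hi⟩ := by
        apply Fin.ext
        rfl
      rw [heta, Equiv.symm_apply_apply] at this
      exact this
    · have h1 : u i = 0 := by
        rw [← Finsupp.notMem_support_iff]
        intro hmem
        exact hi (Finset.mem_biUnion.mpr ⟨u, hu, hmem⟩)
      have h2 : v i = 0 := by
        rw [← Finsupp.notMem_support_iff]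
        intro hmem
        exact hi (Finset.mem_biUnion.mpr ⟨v, hv, hmem⟩)
      rw [h1, h2]

end MonAux
namespace MonAux2
open MvPolynomial

variable {σ : Type*} {K : Type*} [Field K]

/-- leading-term behaviour under multiplication -/
lemma leading_mul (ℓ : (σ →₀ ℕ) →+ ℕ) {f g : MvPolynomial σ K} {u v : σ →₀ ℕ}
    (hfle : ∀ a ∈ f.support, ℓ a ≤ ℓ u) (hfeq : ∀ a ∈ f.support, ℓ a = ℓ u → a = u)
    (hgle : ∀ a ∈ g.support, ℓ a ≤ ℓ v) (hgeq : ∀ a ∈ g.support, ℓ a = ℓ v → a = v) :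
    MvPolynomial.coeff (u + v) (f * g) = MvPolynomial.coeff u f * MvPolynomial.coeff v g ∧
    (∀ a ∈ (f * g).support, ℓ a ≤ ℓ u + ℓ v ∧ (ℓ a = ℓ u + ℓ v → a = u + v)) := by
  classical
  constructor
  · rw [MvPolynomial.coeff_mul]
    apply Finset.sum_eq_single (u, v)
    · rintro ⟨a, b⟩ hab hne
      rw [Finset.HasAntidiagonal.mem_antidiagonal] at hab
      by_contra hc
      have ha : a ∈ f.support := by
        rw [MvPolynomial.mem_support_iff]
        intro h0
        exact hc (by simp [h0])
      have hb : b ∈ g.support := by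
        rw [MvPolynomial.mem_support_iff]
        intro h0
        exact hc (by simp [h0])
      have hsum : ℓ a + ℓ b = ℓ u + ℓ v := by
        rw [← map_add, ← map_add, hab]
      have h1 := hfle a ha
      have h2 := hgle b hb
      have h3 : ℓ a = ℓ u := by omega
      have h4 : ℓ b = ℓ v := by omega
      exact hne (Prod.ext (hfeq a ha h3) (hgeq b hb h4))
    · intro h
      exfalso
      apply h
      rw [Finset.HasAntidiagonal.mem_antidiagonal]
  · intro a ha
    have := MvPolynomial.support_mul f g ha
    rw [Finset.mem_add] at this
    obtain ⟨x, hx, y, hy, rfl⟩ := this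
    have h1 := hfle x hx
    have h2 := hgle y hy
    constructor
    · rw [map_add]
      omega
    · intro heq
      rw [map_add] at heq
      have h3 : ℓ x = ℓ u := by omega
      have h4 : ℓ y = ℓ v := by omega
      rw [hfeq x hx h3, hgeq y hy h4]

/-- leading-term behaviour of powers -/
lemma leading_pow (ℓ : (σ →₀ ℕ) →+ ℕ) {f : MvPolynomial σ K} {u : σ →₀ ℕ}
    (hfle : ∀ a ∈ f.support, ℓ a ≤ ℓ u) (hfeq : ∀ a ∈ f.support, ℓ a = ℓ u → a = u) :
    ∀ N : ℕ, MvPolynomial.coeff (N • u) (f ^ N) = (MvPolynomial.coeff u f) ^ N ∧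
      (∀ a ∈ (f ^ N).support, ℓ a ≤ ℓ (N • u) ∧ (ℓ a = ℓ (N • u) → a = N • u)) := by
  intro N
  induction N with
  | zero =>
    rw [zero_nsmul, pow_zero, pow_zero]
    constructor
    · exact MvPolynomial.coeff_zero_one
    · intro a ha
      have ha0 : a = 0 := by
        classical
        rw [MvPolynomial.mem_support_iff, MvPolynomial.coeff_one] at ha
        by_contra hc
        simp [Ne.symm hc] at ha
      subst ha0
      exact ⟨le_refl _, fun _ => rfl⟩
  | succ N ih =>
    have key := leading_mul ℓ (f := f ^ N) (g := f) (u := N • u) (v := u)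
      (fun a ha => (ih.2 a ha).1) (fun a ha heq => (ih.2 a ha).2 heq) hfle hfeq
    have hsm : (N + 1) • u = N • u + u := succ_nsmul u N
    constructor
    · rw [hsm, pow_succ, key.1, ih.1, pow_succ]
    · intro a ha
      rw [pow_succ] at ha
      have h2 := key.2 a ha
      rw [hsm, map_add]
      exact h2

end MonAux2
namespace MonAux3
open MvPolynomial MonAux MonAux2

variable {σ : Type*} {K : Type*} [Field K]

lemma zero_mem_suppIn (S : AddSubmonoid (σ →₀ ℕ)) : (0 : MvPolynomial σ K) ∈ suppIn K σ S := by
  intro u hu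
  simp at hu

lemma core_poly (S : AddSubmonoid (σ →₀ ℕ))
    (hS : ∀ (u s1 sq : σ →₀ ℕ), s1 ∈ S → sq ∈ S → u + sq ∈ S →
      (∀ C : ℕ, ∃ Kk : ℕ, C < Kk ∧ Kk • u + s1 ∈ S) → u ∈ S) :
    ∀ (N : ℕ) (f p q : MvPolynomial σ K), f.support.card = N → q ≠ 0 → f * q = p →
      p ∈ suppIn K σ S → q ∈ suppIn K σ S →
      IsIntegral ↥(suppIn K σ S) f → f ∈ suppIn K σ S := by
  classical
  intro N
  induction N using Nat.strong_induction_on with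
  | _ N IH =>
  intro f p q hcard hq0 hfq hp hq hint
  by_cases hf0 : f = 0
  · rw [hf0]; exact zero_mem_suppIn S
  -- maximizers of an injective functional
  obtain ⟨ℓ, hℓ⟩ := exists_injective_functional (f.support ∪ q.support)
  obtain ⟨u, huf, humax⟩ := Finset.exists_max_image f.support ℓ
    (MvPolynomial.support_nonempty.mpr hf0)
  obtain ⟨v, hvq, hvmax⟩ := Finset.exists_max_image q.support ℓ
    (MvPolynomial.support_nonempty.mpr hq0)
  have hueq : ∀ a ∈ f.support, ℓ a = ℓ u → a = u := by
    intro a ha h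
    exact hℓ (Finset.mem_coe.mpr (Finset.mem_union_left _ ha))
      (Finset.mem_coe.mpr (Finset.mem_union_left _ huf)) h
  have hveq : ∀ a ∈ q.support, ℓ a = ℓ v → a = v := by
    intro a ha h
    exact hℓ (Finset.mem_coe.mpr (Finset.mem_union_right _ ha))
      (Finset.mem_coe.mpr (Finset.mem_union_right _ hvq)) h
  have hlm := leading_mul ℓ (f := f) (g := q) humax hueq hvmax hveq
  have hcoeff : MvPolynomial.coeff (u + v) p ≠ 0 := by
    rw [← hfq, hlm.1]
    exact mul_ne_zero (MvPolynomial.mem_support_iff.mp huf)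
      (MvPolynomial.mem_support_iff.mp hvq)
  have huv : u + v ∈ S := hp _ (MvPolynomial.mem_support_iff.mpr hcoeff)
  have hvS : v ∈ S := hq v hvq
  -- the integral equation
  obtain ⟨P, hPm, hPev⟩ := hint
  set Q := P.map (algebraMap ↥(suppIn K σ S) (MvPolynomial σ K)) with hQdef
  have hQm : Q.Monic := hPm.map _
  have hQev : Q.eval f = 0 := by rw [hQdef, Polynomial.eval_map]; exact hPev
  have hQcoeff : ∀ i, Q.coeff i ∈ suppIn K σ S := by
    intro i
    rw [hQdef, Polynomial.coeff_map]
    exact (P.coeff i).2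
  set k := Q.natDegree with hkdef
  have hk1 : 1 ≤ k := by
    by_contra hk
    push_neg at hk
    have hk0 : Q.natDegree = 0 := by omega
    have : Q = 1 := (hQm.natDegree_eq_zero).mp hk0
    rw [this] at hQev
    simp at hQev
  have hEq : f ^ k = - ∑ i ∈ Finset.range k, Q.coeff i * f ^ i := by
    have h1 := Polynomial.eval_eq_sum_range (p := Q) f
    rw [hQev, Finset.sum_range_succ, hQm.coeff_natDegree, one_mul] at h1
    rw [eq_neg_iff_add_eq_zero]
    rw [add_comm]
    exact h1.symm
  set W := (Finset.range k).biUnion (fun i => (f ^ i).support) with hWdef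
  have hpow : ∀ (N' : ℕ), ∀ w ∈ (f ^ N').support, ∃ s ∈ S, ∃ t ∈ W, w = s + t := by
    intro N'
    induction N' using Nat.strong_induction_on with
    | _ N' IH2 =>
    intro w hw
    by_cases hN' : N' < k
    · exact ⟨0, S.zero_mem, w,
        Finset.mem_biUnion.mpr ⟨N', Finset.mem_range.mpr hN', hw⟩, (zero_add w).symm⟩
    · push_neg at hN'
      have hsplit : f ^ N' = - ∑ i ∈ Finset.range k, Q.coeff i * f ^ (N' - k + i) := by
        have h1 : f ^ N' = f ^ (N' - k) * f ^ k := by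
          rw [← pow_add]
          congr 1
          omega
        rw [h1, hEq, mul_neg, Finset.mul_sum]
        congr 1
        apply Finset.sum_congr rfl
        intro i _
        rw [← mul_assoc, mul_comm (f ^ (N' - k)) (Q.coeff i), mul_assoc, ← pow_add]
      rw [hsplit] at hw
      rw [MvPolynomial.support_neg] at hw
      have hw2 := MvPolynomial.support_sum hw
      obtain ⟨i, hi, hwi⟩ := Finset.mem_biUnion.mp hw2
      have hw3 := MvPolynomial.support_mul _ _ hwi
      rw [Finset.mem_add] at hw3
      obtain ⟨w1, hw1, w2, hw2', rfl⟩ := hw3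
      have hiN : N' - k + i < N' := by
        rw [Finset.mem_range] at hi
        omega
      obtain ⟨s, hsS, t, htW, hts⟩ := IH2 _ hiN w2 hw2'
      exact ⟨w1 + s, S.add_mem (hQcoeff i w1 hw1) hsS, t, htW, by rw [hts, add_assoc]⟩
  have hpowu := leading_pow ℓ humax hueq
  have hNu : ∀ N' : ℕ, N' • u ∈ (f ^ N').support := by
    intro N'
    rw [MvPolynomial.mem_support_iff, (hpowu N').1]
    exact pow_ne_zero _ (MvPolynomial.mem_support_iff.mp huf)
  have hcover : ∀ N' : ℕ, ∃ t ∈ W, ∃ s ∈ S, N' • u = s + t := by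
    intro N'
    obtain ⟨s, hsS, t, htW, hts⟩ := hpow N' _ (hNu N')
    exact ⟨t, htW, s, hsS, hts⟩
  have hinf : ∃ t ∈ W, {N' : ℕ | ∃ s ∈ S, N' • u = s + t}.Infinite := by
    by_contra hcon
    push_neg at hcon
    have hfin : (Set.univ : Set ℕ).Finite := by
      apply Set.Finite.subset (Set.Finite.biUnion W.finite_toSet
        (fun t ht => (hcon t ht)))
      intro N' _
      obtain ⟨t, htW, hs⟩ := hcover N'
      exact Set.mem_biUnion htW hs
    exact Set.infinite_univ hfin
  obtain ⟨t0, ht0W, hInf⟩ := hinf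
  obtain ⟨N1, hN1⟩ := hInf.nonempty
  obtain ⟨s1, hs1S, hs1⟩ := hN1
  have huS : u ∈ S := by
    apply hS u s1 v hs1S hvS huv
    intro C
    obtain ⟨N2, hN2mem, hN2gt⟩ := hInf.exists_gt (C + N1)
    obtain ⟨s2, hs2S, hs2⟩ := hN2mem
    refine ⟨N2 - N1, by omega, ?_⟩
    have hadd : (N2 - N1) • u + s1 + t0 = s2 + t0 := by
      calc (N2 - N1) • u + s1 + t0 = (N2 - N1) • u + (s1 + t0) := by rw [add_assoc]
        _ = (N2 - N1) • u + N1 • u := by rw [hs1]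
        _ = ((N2 - N1) + N1) • u := (add_nsmul u _ _).symm
        _ = N2 • u := by congr 1; omega
        _ = s2 + t0 := hs2
    have hfin : (N2 - N1) • u + s1 = s2 := add_right_cancel hadd
    rw [hfin]
    exact hs2S
  -- subtract the leading monomial and recurse
  set c := MvPolynomial.coeff u f with hcdef
  set f' := f - MvPolynomial.monomial u c with hf'def
  have hsupp' : f'.support ⊆ f.support.erase u := by
    intro a ha
    rw [MvPolynomial.mem_support_iff] at ha
    rw [hf'def, MvPolynomial.coeff_sub, MvPolynomial.coeff_monomial] at ha
    by_cases hau : u = a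
    · subst hau
      simp [hcdef] at ha
    · rw [Finset.mem_erase]
      refine ⟨fun h => hau h.symm, ?_⟩
      rw [MvPolynomial.mem_support_iff]
      simpa [hau] using ha
  have hcard' : f'.support.card < N := by
    have h1 : f'.support.card ≤ (f.support.erase u).card := Finset.card_le_card hsupp'
    have h2 : (f.support.erase u).card = f.support.card - 1 := Finset.card_erase_of_mem huf
    have h3 : 1 ≤ f.support.card := Finset.card_pos.mpr ⟨u, huf⟩
    omega
  have hmono_mem : MvPolynomial.monomial u c ∈ suppIn K σ S := monomial_mem_suppIn huS
  have hfq' : f' * q = p - MvPolynomial.monomial u c * q := by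
    rw [hf'def, sub_mul, hfq]
  have hp' : p - MvPolynomial.monomial u c * q ∈ suppIn K σ S :=
    Subalgebra.sub_mem _ hp (Subalgebra.mul_mem _ hmono_mem hq)
  have hint' : IsIntegral ↥(suppIn K σ S) f' := by
    have h1 : f ∈ integralClosure ↥(suppIn K σ S) (MvPolynomial σ K) := ⟨P, hPm, hPev⟩
    have h2 : MvPolynomial.monomial u c ∈
        integralClosure ↥(suppIn K σ S) (MvPolynomial σ K) := by
      have : MvPolynomial.monomial u c =
          algebraMap ↥(suppIn K σ S) (MvPolynomial σ K) ⟨MvPolynomial.monomial u c, hmono_mem⟩ :=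
        rfl
      rw [this]
      exact Subalgebra.algebraMap_mem _ _
    exact Subalgebra.sub_mem _ h1 h2
  have hf'mem := IH _ hcard' f' _ q rfl hq0 hfq' hp' hq hint'
  have : f = f' + MvPolynomial.monomial u c := by rw [hf'def, sub_add_cancel]
  rw [this]
  exact Subalgebra.add_mem _ hf'mem hmono_mem

end MonAux3
namespace MonAux4
open MvPolynomial MonAux MonAux2 MonAux3

variable {σ : Type*} {K : Type*} [Field K]

set_option maxHeartbeats 2000000 in
set_option synthInstance.maxHeartbeats 400000 in
theorem suppIn_isIntegrallyClosed (S : AddSubmonoid (σ →₀ ℕ))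
    (hS : ∀ (u s1 sq : σ →₀ ℕ), s1 ∈ S → sq ∈ S → u + sq ∈ S →
      (∀ C : ℕ, ∃ Kk : ℕ, C < Kk ∧ Kk • u + s1 ∈ S) → u ∈ S) :
    IsIntegrallyClosed ↥(suppIn K σ S) := by
  set g : ↥(suppIn K σ S) →+* FractionRing (MvPolynomial σ K) :=
    (algebraMap (MvPolynomial σ K) (FractionRing (MvPolynomial σ K))).comp
      (Subalgebra.val (suppIn K σ S)).toRingHom with hgdef
  have hginj : Function.Injective g := by
    intro a b hab
    apply Subtype.val_injective
    exact IsFractionRing.injective (MvPolynomial σ K) (FractionRing (MvPolynomial σ K)) hab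
  rw [isIntegrallyClosed_iff (FractionRing ↥(suppIn K σ S))]
  intro x hx
  set j := IsFractionRing.lift (K := FractionRing ↥(suppIn K σ S)) hginj with hjdef
  have hjal : ∀ r : ↥(suppIn K σ S),
      j (algebraMap ↥(suppIn K σ S) (FractionRing ↥(suppIn K σ S)) r) = g r :=
    fun r => IsFractionRing.lift_algebraMap hginj r
  obtain ⟨P, hPm, hPev⟩ := hx
  have h1 : Polynomial.eval₂ g (j x) P = 0 := by
    have h0 := congrArg j hPev
    rw [Polynomial.hom_eval₂, map_zero] at h0
    have hcomp : j.comp (algebraMap ↥(suppIn K σ S) (FractionRing ↥(suppIn K σ S))) = g :=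
      RingHom.ext hjal
    rwa [hcomp] at h0
  have h2 : IsIntegral (MvPolynomial σ K) (j x) := by
    refine ⟨P.map (Subalgebra.val (suppIn K σ S)).toRingHom, hPm.map _, ?_⟩
    rw [Polynomial.eval₂_map]
    exact h1
  obtain ⟨h, hh⟩ := IsIntegrallyClosed.isIntegral_iff.mp h2
  obtain ⟨a, b, hbmem, hab⟩ := IsFractionRing.div_surjective (A := ↥(suppIn K σ S)) x
  have hb0 : b ≠ 0 := nonZeroDivisors.ne_zero hbmem
  have hb0' : (b : MvPolynomial σ K) ≠ 0 := by
    intro hc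
    exact hb0 (Subtype.val_injective hc)
  have hjx : j x = g a / g b := by
    rw [← hab, map_div₀, hjal, hjal]
  have hgb0 : g b ≠ 0 := by
    intro hc
    apply hb0
    apply hginj
    rw [hc, map_zero]
  have heqA : h * (b : MvPolynomial σ K) = (a : MvPolynomial σ K) := by
    apply IsFractionRing.injective (MvPolynomial σ K) (FractionRing (MvPolynomial σ K))
    rw [map_mul]
    have hgb : (algebraMap (MvPolynomial σ K) (FractionRing (MvPolynomial σ K)))
        (b : MvPolynomial σ K) = g b := rfl
    have hga : (algebraMap (MvPolynomial σ K) (FractionRing (MvPolynomial σ K)))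
        (a : MvPolynomial σ K) = g a := rfl
    rw [hh, hgb, hga, hjx, div_mul_cancel₀ _ hgb0]
  have hintR : IsIntegral ↥(suppIn K σ S) h := by
    refine ⟨P, hPm, ?_⟩
    apply IsFractionRing.injective (MvPolynomial σ K) (FractionRing (MvPolynomial σ K))
    rw [Polynomial.hom_eval₂, map_zero]
    have hcomp : (algebraMap (MvPolynomial σ K) (FractionRing (MvPolynomial σ K))).comp
        (algebraMap ↥(suppIn K σ S) (MvPolynomial σ K)) = g := rfl
    rw [hcomp, hh, h1]
  have hmem : h ∈ suppIn K σ S :=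
    core_poly S hS h.support.card h (a : MvPolynomial σ K) (b : MvPolynomial σ K)
      rfl hb0' heqA a.2 b.2 hintR
  refine ⟨⟨h, hmem⟩, ?_⟩
  apply j.injective
  rw [hjal]
  have hfin : g ⟨h, hmem⟩ =
      algebraMap (MvPolynomial σ K) (FractionRing (MvPolynomial σ K)) h := rfl
  rw [hfin, hh]

end MonAux4
namespace BorelAux5
open BorelAux BorelAux2 BorelAux3 BorelAux4

variable {n : ℕ}

lemma Psum_smul (j : ℕ) (k : ℕ) (u : Fin n →₀ ℕ) : Psum j (k • u) = k * Psum j u := by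
  unfold Psum
  rw [Finset.mul_sum]
  apply Finset.sum_congr rfl
  intro i _
  rw [Finsupp.smul_apply, smul_eq_mul]

lemma res_smul (k : ℕ) (μ : (Fin n ⊕ Unit) →₀ ℕ) : res (k • μ) = k • res μ := by
  ext i
  rw [res_apply, Finsupp.smul_apply, Finsupp.smul_apply, res_apply]

lemma psum_le_total (j : ℕ) (u : Fin n →₀ ℕ) : Psum j u ≤ Psum n u := by
  rcases le_or_gt j n with h | h
  · exact Psum_mono h u
  · rw [Psum_of_le (le_of_lt h) u]

lemma hS_toric (M : Fin n →₀ ℕ) :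
    ∀ (u s1 sq : Fin n →₀ ℕ), s1 ∈ AddSubmonoid.closure (BorelSet n M) →
      sq ∈ AddSubmonoid.closure (BorelSet n M) →
      u + sq ∈ AddSubmonoid.closure (BorelSet n M) →
      (∀ C : ℕ, ∃ Kk : ℕ, C < Kk ∧ Kk • u + s1 ∈ AddSubmonoid.closure (BorelSet n M)) →
      u ∈ AddSubmonoid.closure (BorelSet n M) := by
  intro u s1 sq hs1 hsq husq hK
  obtain ⟨κq, hq1, _⟩ := mem_toric_closure_iff.mp hsq
  obtain ⟨κ3, h31, _⟩ := mem_toric_closure_iff.mp husq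
  obtain ⟨κ1, h11, _⟩ := mem_toric_closure_iff.mp hs1
  rw [Psum_add] at h31
  by_cases hd : Psum n M = 0
  · have h0 : Psum n u = 0 := by
      rw [hd, Nat.mul_zero] at h31
      omega
    rw [psum_n_eq_zero h0]
    exact AddSubmonoid.zero_mem _
  · have hdpos : 0 < Psum n M := Nat.pos_of_ne_zero hd
    have hκ : κq ≤ κ3 := by
      by_contra hc
      push_neg at hc
      have hlt : κ3 * Psum n M < κq * Psum n M :=
        (Nat.mul_lt_mul_right hdpos).mpr hc
      omega
    set t := κ3 - κq with htdef
    have htot : Psum n u = t * Psum n M := by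
      have he : (t + κq) * Psum n M = κ3 * Psum n M := by
        congr 1
        omega
      rw [add_mul] at he
      omega
    apply mem_toric_closure_iff.mpr
    refine ⟨t, htot, ?_⟩
    intro j
    by_contra hj
    push_neg at hj
    obtain ⟨Kk, hKgt, hKS⟩ := hK (Psum n s1)
    obtain ⟨κ2, hk21, hk22⟩ := mem_toric_closure_iff.mp hKS
    rw [Psum_add, Psum_smul] at hk21
    have hκ2 : Kk * t + κ1 = κ2 := by
      apply Nat.eq_of_mul_eq_mul_right hdpos
      calc (Kk * t + κ1) * Psum n M = Kk * (t * Psum n M) + κ1 * Psum n M := by ring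
        _ = Kk * Psum n u + Psum n s1 := by rw [← htot, ← h11]
        _ = κ2 * Psum n M := hk21
    have F1 : (Kk * t + κ1) * Psum j M ≤ Kk * Psum j u + Psum j s1 := by
      rw [hκ2]
      have := hk22 j
      rwa [Psum_add, Psum_smul] at this
    have F2 : Psum j u + 1 ≤ t * Psum j M := hj
    have F3 : Kk * (Psum j u + 1) ≤ Kk * (t * Psum j M) := Nat.mul_le_mul_left Kk F2
    have F4 : Psum j s1 ≤ Psum n s1 := psum_le_total j s1
    have F6 : (Kk * t + κ1) * Psum j M = Kk * (t * Psum j M) + κ1 * Psum j M := by ring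
    have F7 : Kk * (Psum j u + 1) = Kk * Psum j u + Kk := by ring
    rw [F6] at F1
    rw [F7] at F3
    generalize hA2 : Kk * (t * Psum j M) = X at F1 F3
    generalize hA3 : κ1 * Psum j M = Y at F1
    generalize hA5 : Kk * Psum j u = Z at F1 F3
    omega

lemma hS_rees (M : Fin n →₀ ℕ) :
    ∀ (u s1 sq : (Fin n ⊕ Unit) →₀ ℕ), s1 ∈ AddSubmonoid.closure (reesGens M) →
      sq ∈ AddSubmonoid.closure (reesGens M) →
      u + sq ∈ AddSubmonoid.closure (reesGens M) →
      (∀ C : ℕ, ∃ Kk : ℕ, C < Kk ∧ Kk • u + s1 ∈ AddSubmonoid.closure (reesGens M)) →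
      u ∈ AddSubmonoid.closure (reesGens M) := by
  intro u s1 sq hs1 _ _ hK
  apply mem_rees_closure_iff.mpr
  intro j
  by_contra hj
  push_neg at hj
  obtain ⟨Kk, hKgt, hKS⟩ := hK (Psum n (res s1))
  have hchar := mem_rees_closure_iff.mp hKS j
  rw [res_add, res_smul, Psum_add, Psum_smul, Finsupp.add_apply, Finsupp.smul_apply,
    smul_eq_mul] at hchar
  have F1 : (Kk * u (Sum.inr ()) + s1 (Sum.inr ())) * Psum j M
      ≤ Kk * Psum j (res u) + Psum j (res s1) := hchar
  have F2 : Psum j (res u) + 1 ≤ u (Sum.inr ()) * Psum j M := hj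
  have F3 : Kk * (Psum j (res u) + 1) ≤ Kk * (u (Sum.inr ()) * Psum j M) :=
    Nat.mul_le_mul_left Kk F2
  have F4 : Psum j (res s1) ≤ Psum n (res s1) := psum_le_total j (res s1)
  have F6 : (Kk * u (Sum.inr ()) + s1 (Sum.inr ())) * Psum j M
      = Kk * (u (Sum.inr ()) * Psum j M) + s1 (Sum.inr ()) * Psum j M := by ring
  have F7 : Kk * (Psum j (res u) + 1) = Kk * Psum j (res u) + Kk := by ring
  rw [F6] at F1
  rw [F7] at F3
  generalize hA2 : Kk * (u (Sum.inr ()) * Psum j M) = X at F1 F3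
  generalize hA3 : s1 (Sum.inr ()) * Psum j M = Y at F1
  generalize hA5 : Kk * Psum j (res u) = Z at F1 F3
  omega

end BorelAux5

open BorelAux BorelAux2 BorelAux3 BorelAux4 BorelAux5 MonAux MonAux2 MonAux3 MonAux4 in
/-- Corollary 4.10 (De Negri), normality part: for a principal Borel ideal
`I = ⟨Borel(M)⟩`, the toric ring `K[I]` (the `K`-subalgebra of `K[x_1,…,x_n]` generated
by the monomials of `Borel(M)`) and the Rees algebra `R[It]` (the `K`-subalgebra of
`K[x_1,…,x_n,t]` generated by `x_1,…,x_n` and all `m·t`, `m ∈ Borel(M)`) are normal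
domains: integral domains integrally closed in their fields of fractions. -/
theorem principal_borel_toric_and_rees_normal
    (K : Type*) [Field K] {n : ℕ} (M : Fin n →₀ ℕ) :
    (IsDomain (Algebra.adjoin K
        {p : MvPolynomial (Fin n) K | ∃ m ∈ BorelSet n M,
          p = MvPolynomial.monomial m (1 : K)}) ∧
      IsIntegrallyClosed (Algebra.adjoin K
        {p : MvPolynomial (Fin n) K | ∃ m ∈ BorelSet n M,
          p = MvPolynomial.monomial m (1 : K)})) ∧
    (IsDomain (Algebra.adjoin K
        ((Set.range fun i : Fin n => (MvPolynomial.X (Sum.inl i) :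
            MvPolynomial (Fin n ⊕ Unit) K)) ∪
          {p : MvPolynomial (Fin n ⊕ Unit) K | ∃ m ∈ BorelSet n M,
            p = MvPolynomial.monomial
              (Finsupp.mapDomain Sum.inl m + Finsupp.single (Sum.inr ()) 1) (1 : K)})) ∧
      IsIntegrallyClosed (Algebra.adjoin K
        ((Set.range fun i : Fin n => (MvPolynomial.X (Sum.inl i) :
            MvPolynomial (Fin n ⊕ Unit) K)) ∪
          {p : MvPolynomial (Fin n ⊕ Unit) K | ∃ m ∈ BorelSet n M,
            p = MvPolynomial.monomial
              (Finsupp.mapDomain Sum.inl m + Finsupp.single (Sum.inr ()) 1) (1 : K)}))) := by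
  constructor
  · rw [adjoin_eq_suppIn (K := K) (BorelSet n M)]
    exact ⟨inferInstance, suppIn_isIntegrallyClosed _ (hS_toric M)⟩
  · have hset : ((Set.range fun i : Fin n => (MvPolynomial.X (Sum.inl i) :
        MvPolynomial (Fin n ⊕ Unit) K)) ∪
          {p : MvPolynomial (Fin n ⊕ Unit) K | ∃ m ∈ BorelSet n M,
            p = MvPolynomial.monomial
              (Finsupp.mapDomain Sum.inl m + Finsupp.single (Sum.inr ()) 1) (1 : K)})
        = {p : MvPolynomial (Fin n ⊕ Unit) K | ∃ m ∈ reesGens M,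
            p = MvPolynomial.monomial m (1 : K)} := by
      ext p
      constructor
      · rintro (⟨i, rfl⟩ | ⟨m, hm, rfl⟩)
        · exact ⟨Finsupp.single (Sum.inl i) 1, Set.mem_union_left _ ⟨i, rfl⟩, rfl⟩
        · exact ⟨_, Set.mem_union_right _ ⟨m, hm, rfl⟩, rfl⟩
      · rintro ⟨μ, hμ, rfl⟩
        rcases hμ with ⟨i, rfl⟩ | ⟨m, hm, rfl⟩
        · exact Or.inl ⟨i, rfl⟩
        · exact Or.inr ⟨m, hm, rfl⟩
    rw [hset, adjoin_eq_suppIn (K := K) (reesGens M)]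
    exact ⟨inferInstance, suppIn_isIntegrallyClosed _ (hS_rees M)⟩
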